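/- Let γ be a 2n×2n real symplectic matrix, λ an eigenvalue with |λ| = 1, and ξ_{i,j} Jordan chains as above (γξ_{i,j} = λξ_{i,j} - ξ_{i,j-1}, ξ_{i,0}=0). Then whenever j + j' ≤ max(j_i, j_{i'}), one has (ξ_{i,j}, ξ_{i',j'})_G = 0. -/

import Mathlib

open Matrix Complex

noncomputable def JmatR (n : ℕ) : Matrix (Fin n ⊕ Fin n) (Fin n ⊕ Fin n) ℝ :=
  Matrix.fromBlocks 0 1 (-1) 0

noncomputable def Jmat (n : ℕ) : Matrix (Fin n ⊕ Fin n) (Fin n ⊕ Fin n) ℂ :=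
  Matrix.fromBlocks 0 1 (-1) 0

/-- The Krein form `(x,y)_G = i ⟨x, J y⟩`. -/
noncomputable def krein (n : ℕ) (x y : (Fin n ⊕ Fin n) → ℂ) : ℂ :=
  Complex.I * ∑ j, x j * (starRingEnd ℂ) ((Jmat n).mulVec y j)

lemma krein_eq (n : ℕ) (x y : (Fin n ⊕ Fin n) → ℂ) :
    krein n x y = Complex.I * (x ⬝ᵥ star ((Jmat n).mulVec y)) := rfl

lemma Jmat_eq_map (n : ℕ) : Jmat n = (JmatR n).map Complex.ofReal := by
  ext (i|i) (j|j) <;>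
    simp [Jmat, JmatR, Matrix.map_apply, Matrix.one_apply] <;>
    split_ifs <;> simp

lemma star_mulVec_map {α : Type*} [Fintype α] (M : Matrix α α ℝ) (y : α → ℂ) :
    star ((M.map Complex.ofReal).mulVec y) = (M.map Complex.ofReal).mulVec (star y) := by
  funext k
  simp [Matrix.mulVec, dotProduct, Matrix.map_apply, star_sum, star_mul',
    Complex.conj_ofReal, mul_comm]

lemma map_mul_ofReal {α : Type*} [Fintype α] (M N : Matrix α α ℝ) :
    (M * N).map Complex.ofReal = M.map Complex.ofReal * N.map Complex.ofReal := by
  ext k l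
  simp [Matrix.mul_apply, Matrix.map_apply]

lemma krein_inv (n : ℕ) (γ : Matrix (Fin n ⊕ Fin n) (Fin n ⊕ Fin n) ℝ)
    (hγ : γᵀ * JmatR n * γ = JmatR n) (x y : (Fin n ⊕ Fin n) → ℂ) :
    krein n ((γ.map Complex.ofReal).mulVec x) ((γ.map Complex.ofReal).mulVec y)
      = krein n x y := by
  set G := γ.map Complex.ofReal with hG
  rw [krein_eq, krein_eq, Jmat_eq_map]
  have h1 : ((JmatR n).map Complex.ofReal).mulVec (G.mulVec y)
      = ((JmatR n * γ).map Complex.ofReal).mulVec y := by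
    rw [map_mul_ofReal, ← Matrix.mulVec_mulVec]
  rw [h1, star_mulVec_map]
  have h2 : G.mulVec x ⬝ᵥ ((JmatR n * γ).map Complex.ofReal).mulVec (star y)
      = x ⬝ᵥ ((γᵀ * (JmatR n * γ)).map Complex.ofReal).mulVec (star y) := by
    rw [map_mul_ofReal, ← Matrix.mulVec_mulVec, dotProduct_comm,
      Matrix.dotProduct_mulVec]
    rw [dotProduct_comm]
    congr 1
    rw [← Matrix.mulVec_transpose, map_mul_ofReal, map_mul_ofReal, ← Matrix.mulVec_mulVec,
      hG, Matrix.transpose_map]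
    simp [Matrix.mulVec_mulVec, Matrix.mul_assoc]
  rw [h2, ← mul_assoc, hγ, star_mulVec_map]

lemma krein_smul_left (n : ℕ) (a : ℂ) (x y : (Fin n ⊕ Fin n) → ℂ) :
    krein n (a • x) y = a * krein n x y := by
  simp [krein_eq, smul_dotProduct, smul_eq_mul]; ring

lemma krein_sub_left (n : ℕ) (x x' y : (Fin n ⊕ Fin n) → ℂ) :
    krein n (x - x') y = krein n x y - krein n x' y := by
  simp [krein_eq, sub_dotProduct]; ring

lemma krein_smul_right (n : ℕ) (a : ℂ) (x y : (Fin n ⊕ Fin n) → ℂ) :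
    krein n x (a • y) = (starRingEnd ℂ) a * krein n x y := by
  simp [krein_eq, Matrix.mulVec_smul, star_smul, dotProduct_smul, smul_eq_mul,
    Complex.star_def]
  ring

lemma krein_sub_right (n : ℕ) (x y y' : (Fin n ⊕ Fin n) → ℂ) :
    krein n x (y - y') = krein n x y - krein n x y' := by
  simp [krein_eq, Matrix.mulVec_sub, star_sub, dotProduct_sub]; ring

lemma krein_zero_right (n : ℕ) (x : (Fin n ⊕ Fin n) → ℂ) : krein n x 0 = 0 := by
  simp [krein_eq]

lemma krein_zero_left (n : ℕ) (y : (Fin n ⊕ Fin n) → ℂ) : krein n 0 y = 0 := by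
  simp [krein_eq]

lemma Jmat_transpose (n : ℕ) : (Jmat n)ᵀ = -Jmat n := by
  ext (i|i) (j|j) <;>
    simp [Jmat, Matrix.transpose_apply, Matrix.one_apply, eq_comm]

lemma krein_conj (n : ℕ) (x y : (Fin n ⊕ Fin n) → ℂ) :
    (starRingEnd ℂ) (krein n x y) = krein n y x := by
  rw [krein_eq, krein_eq, _root_.map_mul, Complex.conj_I]
  have h1 : (starRingEnd ℂ) (x ⬝ᵥ star ((Jmat n).mulVec y)) = star x ⬝ᵥ (Jmat n).mulVec y := by
    simp [dotProduct, map_sum, _root_.map_mul, Complex.conj_conj]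
  rw [h1]
  have h2 : star ((Jmat n).mulVec x) = (Jmat n).mulVec (star x) := by
    rw [Jmat_eq_map]; exact star_mulVec_map _ _
  rw [h2, Matrix.dotProduct_mulVec, ← Matrix.mulVec_transpose, Jmat_transpose,
    Matrix.neg_mulVec, neg_dotProduct, dotProduct_comm]
  ring

lemma lam_conj (lam : ℂ) (hU : ‖lam‖ = 1) : lam * (starRingEnd ℂ) lam = 1 := by
  rw [Complex.mul_conj]
  norm_cast
  rw [Complex.normSq_eq_norm_sq, hU, one_pow]

lemma rel (n m : ℕ) (γ : Matrix (Fin n ⊕ Fin n) (Fin n ⊕ Fin n) ℝ)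
    (hγ : γᵀ * JmatR n * γ = JmatR n)
    (lam : ℂ) (hU : ‖lam‖ = 1)
    (jsz : Fin m → ℕ) (ξ : Fin m → ℕ → (Fin n ⊕ Fin n) → ℂ)
    (hchain : ∀ i : Fin m, ∀ j : ℕ, 1 ≤ j → j ≤ jsz i →
      (γ.map Complex.ofReal).mulVec (ξ i j) = lam • ξ i j - ξ i (j - 1))
    (i i' : Fin m) (a b : ℕ)
    (ha1 : 1 ≤ a) (ha2 : a ≤ jsz i) (hb1 : 1 ≤ b) (hb2 : b ≤ jsz i') :
    lam * krein n (ξ i a) (ξ i' (b-1)) + (starRingEnd ℂ) lam * krein n (ξ i (a-1)) (ξ i' b)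
      = krein n (ξ i (a-1)) (ξ i' (b-1)) := by
  have h := krein_inv n γ hγ (ξ i a) (ξ i' b)
  rw [hchain i a ha1 ha2, hchain i' b hb1 hb2, krein_sub_left, krein_sub_right,
    krein_sub_right, krein_smul_left, krein_smul_left, krein_smul_right,
    krein_smul_right] at h
  have hlam := lam_conj lam hU
  linear_combination -h + krein n (ξ i a) (ξ i' b) * hlam

lemma vanish_aux (n m : ℕ) (γ : Matrix (Fin n ⊕ Fin n) (Fin n ⊕ Fin n) ℝ)
    (hγ : γᵀ * JmatR n * γ = JmatR n)
    (lam : ℂ) (hU : ‖lam‖ = 1)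
    (jsz : Fin m → ℕ) (ξ : Fin m → ℕ → (Fin n ⊕ Fin n) → ℂ)
    (hzero : ∀ i, ξ i 0 = 0)
    (hchain : ∀ i : Fin m, ∀ j : ℕ, 1 ≤ j → j ≤ jsz i →
      (γ.map Complex.ofReal).mulVec (ξ i j) = lam • ξ i j - ξ i (j - 1))
    (i i' : Fin m) :
    ∀ j' j, j' ≤ jsz i' → j + j' ≤ jsz i → krein n (ξ i j) (ξ i' j') = 0 := by
  intro j'
  induction j' with
  | zero => intro j _ _; rw [hzero i']; exact krein_zero_right _ _
  | succ b ih =>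
    intro j hb hjb
    have hrel := rel n m γ hγ lam hU jsz ξ hchain i i' (j+1) (b+1)
      (by omega) (by omega) (by omega) (by omega)
    simp only [Nat.add_sub_cancel] at hrel
    have h1 : krein n (ξ i (j+1)) (ξ i' b) = 0 := ih (j+1) (by omega) (by omega)
    have h2 : krein n (ξ i j) (ξ i' b) = 0 := ih j (by omega) (by omega)
    rw [h1, h2] at hrel
    have hlam := lam_conj lam hU
    linear_combination lam * hrel - krein n (ξ i j) (ξ i' (b+1)) * hlam


/-- Vanishing of the Krein products of Jordan-chain vectors when `j + j' ≤ max(j_i, j_{i'})`. -/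
theorem krein_jordan_chain_vanishing (n m : ℕ)
    (γ : Matrix (Fin n ⊕ Fin n) (Fin n ⊕ Fin n) ℝ)
    (hγ : γᵀ * JmatR n * γ = JmatR n)
    (lam : ℂ) (hU : ‖lam‖ = 1)
    (jsz : Fin m → ℕ) (ξ : Fin m → ℕ → (Fin n ⊕ Fin n) → ℂ)
    (hzero : ∀ i, ξ i 0 = 0)
    (hchain : ∀ i : Fin m, ∀ j : ℕ, 1 ≤ j → j ≤ jsz i →
      (γ.map Complex.ofReal).mulVec (ξ i j) = lam • ξ i j - ξ i (j - 1))
    (i i' : Fin m) (j j' : ℕ) (hj : j ≤ jsz i) (hj' : j' ≤ jsz i')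
    (hsum : j + j' ≤ max (jsz i) (jsz i')) :
    krein n (ξ i j) (ξ i' j') = 0 := by
  rcases le_or_gt (jsz i') (jsz i) with h | h
  · exact vanish_aux n m γ hγ lam hU jsz ξ hzero hchain i i' j' j hj' (by omega)
  · have h0 := vanish_aux n m γ hγ lam hU jsz ξ hzero hchain i' i j j' hj (by omega)
    rw [← krein_conj, h0, map_zero]
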